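/- Let ρ_AB be the 2×4 state (1/8)𝟙⊗𝟙 + (1/4)(t₁ σ₁⊗λ₁ + t₂ σ₂⊗λ₁₃ + t₃ σ₃⊗λ₃), with σ Pauli matrices and λ SU(4) generators. Then ρ_AB is positive semidefinite if and only if t₂² ≤ 1/4 and (|t₁| + |t₃|)² ≤ 1/4. -/

import Mathlib

open Matrix ComplexOrder Kronecker

noncomputable def pauli1 : Matrix (Fin 2) (Fin 2) ℂ := !![0, 1; 1, 0]
noncomputable def pauli2 : Matrix (Fin 2) (Fin 2) ℂ := !![0, -Complex.I; Complex.I, 0]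
noncomputable def pauli3 : Matrix (Fin 2) (Fin 2) ℂ := !![1, 0; 0, -1]

noncomputable def lam1 : Matrix (Fin 4) (Fin 4) ℂ :=
  !![0, 1, 0, 0; 1, 0, 0, 0; 0, 0, 0, 0; 0, 0, 0, 0]
noncomputable def lam3 : Matrix (Fin 4) (Fin 4) ℂ :=
  !![1, 0, 0, 0; 0, -1, 0, 0; 0, 0, 0, 0; 0, 0, 0, 0]
noncomputable def lam13 : Matrix (Fin 4) (Fin 4) ℂ :=
  !![0, 0, 0, 0; 0, 0, 0, 0; 0, 0, 0, -Complex.I; 0, 0, Complex.I, 0]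

/-- Outer products `v vᴴ` are positive semidefinite. -/
lemma outer_psd' {n : Type*} [Fintype n] [DecidableEq n] (v : n → ℂ) :
    (vecMulVec v (star v)).PosSemidef := by
  have : vecMulVec v (star v) = (replicateCol (Fin 1) v) * (replicateCol (Fin 1) v)ᴴ := by
    ext i j; simp [vecMulVec, mul_comm, Matrix.mul_apply, replicateCol]
  rw [this]
  exact posSemidef_self_mul_conjTranspose _

/-- Nonnegative real scalar multiples of PSD matrices are PSD. -/
lemma psd_smul' {n : Type*} [Fintype n] {M : Matrix n n ℂ} (h : M.PosSemidef)
    {c : ℝ} (hc : 0 ≤ c) : ((c : ℂ) • M).PosSemidef := by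
  refine posSemidef_iff_dotProduct_mulVec.mpr ⟨?_, ?_⟩
  · ext i j
    simpa [Matrix.conjTranspose_apply, Complex.conj_ofReal] using
      congrArg (fun z => (c : ℂ) * z) (congrFun (congrFun h.1 i) j)
  · intro x
    rw [Matrix.smul_mulVec, dotProduct_smul, smul_eq_mul]
    exact mul_nonneg (by exact_mod_cast Complex.zero_le_real.2 hc) (h.dotProduct_mulVec_nonneg x)

/-- Quadratic form of a PSD matrix on `e_p + s e_q`. -/
lemma quad' {n : Type*} [Fintype n] {M : Matrix n n ℂ} (hM : M.PosSemidef)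
    (p q : n) (s : ℝ) :
    0 ≤ M p p + (s:ℂ) * M p q + (s:ℂ) * M q p + (s:ℂ)^2 * M q q := by
  have h2 := (hM.submatrix ![p, q]).dotProduct_mulVec_nonneg ![1, (s:ℂ)]
  simp only [dotProduct, mulVec, Fin.sum_univ_two, Matrix.submatrix_apply,
    Matrix.cons_val_zero, Matrix.cons_val_one, Matrix.head_cons, Pi.star_apply,
    star_one, RCLike.star_def, Complex.conj_ofReal] at h2
  rw [_root_.map_one] at h2
  convert h2 using 1
  ring

/-- basis-pair vector: `a` at position `p`, `b` at position `q`. -/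
def bv (p q : Fin 2 × Fin 4) (a b : ℂ) : Fin 2 × Fin 4 → ℂ :=
  fun r => if r = p then a else if r = q then b else 0

set_option maxHeartbeats 4000000 in
theorem two_by_four_state_psd_iff (t₁ t₂ t₃ : ℝ) :
    ((1/8 : ℂ) • (1 : Matrix (Fin 2 × Fin 4) (Fin 2 × Fin 4) ℂ) +
      (1/4 : ℂ) • ((t₁ : ℂ) • (pauli1 ⊗ₖ lam1) + (t₂ : ℂ) • (pauli2 ⊗ₖ lam13) +
        (t₃ : ℂ) • (pauli3 ⊗ₖ lam3))).PosSemidef ↔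
      t₂^2 ≤ 1/4 ∧ (|t₁| + |t₃|)^2 ≤ 1/4 := by
  have key : ((1/8 : ℂ) • (1 : Matrix (Fin 2 × Fin 4) (Fin 2 × Fin 4) ℂ) +
      (1/4 : ℂ) • ((t₁ : ℂ) • (pauli1 ⊗ₖ lam1) + (t₂ : ℂ) • (pauli2 ⊗ₖ lam13) +
        (t₃ : ℂ) • (pauli3 ⊗ₖ lam3))) =
    ((((1:ℝ)/16 + t₃/8 + t₁/8 : ℝ) : ℂ) • vecMulVec (bv (0,0) (1,1) 1 1) (star (bv (0,0) (1,1) 1 1)) +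
     (((1:ℝ)/16 + t₃/8 - t₁/8 : ℝ) : ℂ) • vecMulVec (bv (0,0) (1,1) 1 (-1)) (star (bv (0,0) (1,1) 1 (-1))) +
     (((1:ℝ)/16 - t₃/8 + t₁/8 : ℝ) : ℂ) • vecMulVec (bv (0,1) (1,0) 1 1) (star (bv (0,1) (1,0) 1 1)) +
     (((1:ℝ)/16 - t₃/8 - t₁/8 : ℝ) : ℂ) • vecMulVec (bv (0,1) (1,0) 1 (-1)) (star (bv (0,1) (1,0) 1 (-1))) +
     (((1:ℝ)/16 - t₂/8 : ℝ) : ℂ) • vecMulVec (bv (0,2) (1,3) 1 1) (star (bv (0,2) (1,3) 1 1)) +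
     (((1:ℝ)/16 + t₂/8 : ℝ) : ℂ) • vecMulVec (bv (0,2) (1,3) 1 (-1)) (star (bv (0,2) (1,3) 1 (-1))) +
     (((1:ℝ)/16 + t₂/8 : ℝ) : ℂ) • vecMulVec (bv (0,3) (1,2) 1 1) (star (bv (0,3) (1,2) 1 1)) +
     (((1:ℝ)/16 - t₂/8 : ℝ) : ℂ) • vecMulVec (bv (0,3) (1,2) 1 (-1)) (star (bv (0,3) (1,2) 1 (-1)))) := by
    ext ⟨i, k⟩ ⟨j, l⟩
    fin_cases i <;> fin_cases j <;> fin_cases k <;> fin_cases l <;>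
      (simp +decide [bv, vecMulVec, pauli1, pauli2, pauli3, lam1, lam3, lam13,
        Matrix.one_apply, Matrix.vecHead, Matrix.vecTail]) <;> ring
  constructor
  · intro hM
    have a1 : (0:ℝ) ≤ 1/4 + t₃/2 + t₁/2 := by
      have h := quad' hM ((0:Fin 2), (0:Fin 4)) (1,1) 1
      simp +decide [pauli1, pauli2, pauli3, lam1, lam3, lam13, Matrix.one_apply,
        Matrix.vecHead, Matrix.vecTail] at h
      rw [← Complex.zero_le_real]; push_cast
      convert h using 1; push_cast; ring
    have a2 : (0:ℝ) ≤ 1/4 + t₃/2 - t₁/2 := by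
      have h := quad' hM ((0:Fin 2), (0:Fin 4)) (1,1) (-1)
      simp +decide [pauli1, pauli2, pauli3, lam1, lam3, lam13, Matrix.one_apply,
        Matrix.vecHead, Matrix.vecTail] at h
      rw [← Complex.zero_le_real]; push_cast
      convert h using 1; push_cast; ring
    have a3 : (0:ℝ) ≤ 1/4 - t₃/2 + t₁/2 := by
      have h := quad' hM ((0:Fin 2), (1:Fin 4)) (1,0) 1
      simp +decide [pauli1, pauli2, pauli3, lam1, lam3, lam13, Matrix.one_apply,
        Matrix.vecHead, Matrix.vecTail] at h
      rw [← Complex.zero_le_real]; push_cast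
      convert h using 1; push_cast; ring
    have a4 : (0:ℝ) ≤ 1/4 - t₃/2 - t₁/2 := by
      have h := quad' hM ((0:Fin 2), (1:Fin 4)) (1,0) (-1)
      simp +decide [pauli1, pauli2, pauli3, lam1, lam3, lam13, Matrix.one_apply,
        Matrix.vecHead, Matrix.vecTail] at h
      rw [← Complex.zero_le_real]; push_cast
      convert h using 1; push_cast; ring
    have a5 : (0:ℝ) ≤ 1/4 - t₂/2 := by
      have h := quad' hM ((0:Fin 2), (2:Fin 4)) (1,3) 1
      simp +decide [pauli1, pauli2, pauli3, lam1, lam3, lam13, Matrix.one_apply,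
        Matrix.vecHead, Matrix.vecTail] at h
      rw [← Complex.zero_le_real]; push_cast
      convert h using 1; push_cast; ring
    have a6 : (0:ℝ) ≤ 1/4 + t₂/2 := by
      have h := quad' hM ((0:Fin 2), (2:Fin 4)) (1,3) (-1)
      simp +decide [pauli1, pauli2, pauli3, lam1, lam3, lam13, Matrix.one_apply,
        Matrix.vecHead, Matrix.vecTail] at h
      rw [← Complex.zero_le_real]; push_cast
      convert h using 1; push_cast; ring
    constructor
    · nlinarith
    · rcases abs_cases t₁ with ⟨h1, _⟩ | ⟨h1, _⟩ <;>
        rcases abs_cases t₃ with ⟨h3, _⟩ | ⟨h3, _⟩ <;> nlinarith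
  · rintro ⟨h2, h13⟩
    have habs2 : |t₂| ≤ 1/2 := by nlinarith [sq_abs t₂, abs_nonneg t₂]
    have habs13 : |t₁| + |t₃| ≤ 1/2 := by
      nlinarith [abs_nonneg t₁, abs_nonneg t₃, abs_nonneg (|t₁| + |t₃|)]
    have n1 := neg_abs_le t₁
    have p1 := le_abs_self t₁
    have n3 := neg_abs_le t₃
    have p3 := le_abs_self t₃
    have n2 := neg_abs_le t₂
    have p2 := le_abs_self t₂
    rw [key]
    exact (((((((psd_smul' (outer_psd' _) (by linarith)).add
      (psd_smul' (outer_psd' _) (by linarith))).add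
      (psd_smul' (outer_psd' _) (by linarith))).add
      (psd_smul' (outer_psd' _) (by linarith))).add
      (psd_smul' (outer_psd' _) (by linarith))).add
      (psd_smul' (outer_psd' _) (by linarith))).add
      (psd_smul' (outer_psd' _) (by linarith))).add
      (psd_smul' (outer_psd' _) (by linarith))
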